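/- Define U : ℕ × ℕ → ℤ by U(i,j) = 1 if C(j,i) is odd and 0 otherwise. Suppose 2^{k−1} < n ≤ 2^k and 2^{k−1} ≤ m < 2^k, and let r = m+n−2^k ≥ 0. Then |det((U(i, m+j))_{0≤i,j<n})| = |det((U(i, m+j))_{r≤i<n, 0≤j<2^k−m})|, where the second matrix is the (2^k−m)×(2^k−m) bottom-left block with rows [r, n) and columns m,…,2^k−1 of U. -/

import Mathlib

def U (i j : ℕ) : ℤ := if Odd (Nat.choose j i) then 1 else 0

lemma odd_choose_two_pow_add {k t i : ℕ} (hi : i < 2 ^ k) :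
    Odd ((2 ^ k + t).choose i) ↔ Odd (t.choose i) := by
  rw [Nat.add_choose_eq]
  have h0 : ((0 : ℕ), i) ∈ Finset.HasAntidiagonal.antidiagonal i := by simp
  rw [← Finset.add_sum_erase _ _ h0]
  simp only [Nat.choose_zero_right, one_mul]
  have heven : Even (∑ ij ∈ (Finset.HasAntidiagonal.antidiagonal i).erase (0, i),
      (2 ^ k).choose ij.1 * t.choose ij.2) := by
    rw [even_iff_two_dvd]
    refine Finset.dvd_sum fun ij hij => ?_
    obtain ⟨hne, hmem⟩ := Finset.mem_erase.mp hij
    rw [Finset.HasAntidiagonal.mem_antidiagonal] at hmem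
    have h1 : ij.1 ≠ 0 := by
      intro h
      exact hne (by rw [Prod.ext_iff]; omega)
    have h2 : ij.1 ≠ 2 ^ k := by omega
    exact Dvd.dvd.mul_right (Nat.Prime.dvd_choose_pow Nat.prime_two h1 h2) _
  rw [Nat.odd_add]
  tauto

theorem det_reduces_to_bottom_left_block (k n m : ℕ) (hk : 1 ≤ k)
    (hn1 : 2 ^ (k - 1) < n) (hn2 : n ≤ 2 ^ k)
    (hm1 : 2 ^ (k - 1) ≤ m) (hm2 : m < 2 ^ k) :
    |(Matrix.of fun i j : Fin n => U i (m + j)).det| =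
      |(Matrix.of fun i j : Fin (2 ^ k - m) =>
          U ((m + n - 2 ^ k) + i) (m + j)).det| := by
  have hsum : 2 ^ (k - 1) + 2 ^ (k - 1) = 2 ^ k := by
    rw [← two_mul, ← pow_succ']
    congr 1
    omega
  set B := 2 ^ k with hB
  set P := 2 ^ (k - 1) with hP
  set a := B - m with haa
  set r := m + n - B with hrr
  have hra : r + a = n := by omega
  have har : a + r = n := by omega
  have hma : m + a = B := by omega
  have hrm : r ≤ m := by omega
  set M : Matrix (Fin n) (Fin n) ℤ := Matrix.of fun i j : Fin n => U i (m + j) with hM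
  set eR : Fin a ⊕ Fin r ≃ Fin n :=
    ((Equiv.sumComm (Fin a) (Fin r)).trans finSumFinEquiv).trans (finCongr hra) with heR
  set eC : Fin a ⊕ Fin r ≃ Fin n := finSumFinEquiv.trans (finCongr har) with heC
  set Cb : Matrix (Fin a) (Fin a) ℤ := Matrix.of fun i j : Fin a => U (r + i) (m + j) with hCb
  set Ab : Matrix (Fin r) (Fin a) ℤ := Matrix.of fun (i : Fin r) (j : Fin a) =>
    U i (m + j) with hAb
  set Bb : Matrix (Fin r) (Fin r) ℤ := Matrix.of fun i j : Fin r => U i (B + j) with hBb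
  have hsub : M.submatrix eR eC = Matrix.fromBlocks Cb 0 Ab Bb := by
    ext i j
    cases i with
    | inl i =>
      cases j with
      | inl j =>
        simp [M, eR, eC, Cb, Matrix.submatrix_apply]
      | inr j =>
        simp only [Matrix.submatrix_apply, Matrix.fromBlocks_apply₁₂, Matrix.zero_apply]
        simp only [heR, heC, Equiv.trans_apply, Equiv.sumComm_apply, Sum.swap_inl,
          finSumFinEquiv_apply_right, finSumFinEquiv_apply_left, finCongr_apply, hM,
          Matrix.of_apply, Fin.coe_cast, Fin.coe_natAdd, Fin.coe_castAdd]
        change U (r + ↑i) (m + (a + ↑j)) = 0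
        have hj : m + (a + (j : ℕ)) = B + j := by omega
        rw [hj]
        have hlt : r + (i : ℕ) < B := by omega
        simp only [U, hB]
        rw [if_neg]
        rw [odd_choose_two_pow_add (hB ▸ hlt)]
        have : (j : ℕ) < r + i := by omega
        rw [Nat.choose_eq_zero_of_lt this]
        simp
    | inr i =>
      cases j with
      | inl j =>
        simp [M, eR, eC, Ab, Matrix.submatrix_apply]
      | inr j =>
        simp only [Matrix.submatrix_apply, Matrix.fromBlocks_apply₂₂]
        simp only [heR, heC, Equiv.trans_apply, Equiv.sumComm_apply, Sum.swap_inr,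
          finSumFinEquiv_apply_right, finSumFinEquiv_apply_left, finCongr_apply, hM, hBb,
          Matrix.of_apply, Fin.coe_cast, Fin.coe_natAdd, Fin.coe_castAdd]
        congr 1
        omega
  have hBdet : Bb.det = 1 := by
    have htri : Bb.BlockTriangular id := by
      intro i j hij
      simp only [id_eq] at hij
      simp only [Bb, Matrix.of_apply, U, hB]
      rw [if_neg]
      have hi : (i : ℕ) < 2 ^ k := by omega
      rw [odd_choose_two_pow_add hi, Nat.choose_eq_zero_of_lt (by exact_mod_cast hij)]
      simp
    rw [Matrix.det_of_upperTriangular htri]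
    refine Finset.prod_eq_one fun i _ => ?_
    simp only [Bb, Matrix.of_apply, U, hB]
    rw [if_pos]
    have hi : (i : ℕ) < 2 ^ k := by omega
    rw [odd_choose_two_pow_add hi, Nat.choose_self]
    exact odd_one
  calc |M.det| = |(M.submatrix eR eC).det| := (Matrix.abs_det_submatrix_equiv_equiv eR eC M).symm
    _ = |Cb.det * Bb.det| := by rw [hsub, Matrix.det_fromBlocks_zero₁₂]
    _ = |Cb.det| := by rw [hBdet, mul_one]
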